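/- Let H_1 and H_0 be hypergraphs with finite vertex sets and finitely many hyperedges such that H_0 is obtained from H_1 by a sequence of safe-deletion operations. Then for every collection D_0 of bags over H_0 there exists a collection D_1 of bags over H_1 such that for every positive integer k, D_0 is k-wise consistent if and only if D_1 is k-wise consistent. -/

import Mathlib

variable {A : Type} [DecidableEq A]

/-- The type of `X`-tuples: functions assigning to each attribute `a ∈ X` an element
of its domain `D a`. -/
def Tup (D : A → Type) (X : Finset A) : Type := ∀ a : X, D a.1

/-- Restriction (projection) of an `X`-tuple to `Z ⊆ X`. -/
def Tup.restrict {D : A → Type} {X Z : Finset A} (h : Z ⊆ X) (t : Tup D X) : Tup D Z :=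
  fun a => t ⟨a.1, h a.2⟩

/-- A bag over `X`: a finitely supported function from `X`-tuples to ℕ. -/
abbrev Bag (D : A → Type) (X : Finset A) : Type := Tup D X →₀ ℕ

/-- The marginal of a bag on `Z ⊆ X`. -/
noncomputable def Bag.marginal {D : A → Type} {X Z : Finset A} (h : Z ⊆ X) (R : Bag D X) :
    Bag D Z := Finsupp.mapDomain (Tup.restrict h) R

/-- Two bags are consistent if a common bag over the union of schemas has them as marginals. -/
def Consistent {D : A → Type} {X Y : Finset A} (R : Bag D X) (S : Bag D Y) : Prop :=
  ∃ T : Bag D (X ∪ Y),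
    Bag.marginal Finset.subset_union_left T = R ∧
    Bag.marginal Finset.subset_union_right T = S

/-- A hypergraph: a finite set of vertices together with a finite set of hyperedges. -/
structure FinHypergraph (A : Type) where
  V : Finset A
  E : Finset (Finset A)

/-- Deletion of a vertex `u`: the hypergraph induced on `V ∖ {u}`, whose hyperedges are the
nonempty sets `X ∩ (V ∖ {u})` for hyperedges `X`. -/
def FinHypergraph.vdel (H : FinHypergraph A) (u : A) : FinHypergraph A where
  V := H.V.erase u
  E := (H.E.image (fun X => X ∩ H.V.erase u)).filter (fun X => X.Nonempty)

/-- A single safe-deletion step: a vertex-deletion or a covered-edge-deletion. -/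
def SafeStep (H H' : FinHypergraph A) : Prop :=
  (∃ u ∈ H.V, H' = H.vdel u) ∨
  (∃ e ∈ H.E, (∃ f ∈ H.E, f ≠ e ∧ e ⊆ f) ∧ H' = ⟨H.V, H.E.erase e⟩)

/-- `k`-wise consistency of a collection of bags indexed by a finite set `E` of schemas:
every subcollection indexed by at most `k` schemas is globally consistent. -/
def KWiseConsistent (D : A → Type) (E : Finset (Finset A)) (R : ∀ X ∈ E, Bag D X)
    (k : ℕ) : Prop :=
  ∀ (I : Finset (Finset A)) (hI : I ⊆ E), I.card ≤ k →
    ∃ T : Bag D (I.sup id), ∀ (X : Finset A) (hX : X ∈ I),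
      Bag.marginal (Finset.le_sup (f := id) hX) T = R X (hI hX)

set_option linter.unusedSectionVars false

section Aux
variable {A : Type} [DecidableEq A] {D : A → Type}

noncomputable def bagTotal {X : Finset A} (R : Bag D X) : ℕ := R.sum fun _ n => n

lemma Bag.marginal_marginal {X Y Z : Finset A} (h1 : Y ⊆ X) (h2 : Z ⊆ Y) (R : Bag D X) :
    (R.marginal h1).marginal h2 = R.marginal (h2.trans h1) := by
  rw [Bag.marginal, Bag.marginal, Bag.marginal, ← Finsupp.mapDomain_comp]
  rfl

lemma Bag.marginal_self {X : Finset A} (h : X ⊆ X) (R : Bag D X) :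
    R.marginal h = R := by
  rw [Bag.marginal]
  have : Tup.restrict (D := D) h = id := rfl
  rw [this, Finsupp.mapDomain_id]

lemma bagTotal_marginal {X Z : Finset A} (h : Z ⊆ X) (R : Bag D X) :
    bagTotal (R.marginal h) = bagTotal R := by
  rw [Bag.marginal, bagTotal, bagTotal]
  exact Finsupp.sum_mapDomain_index (fun _ => rfl) (fun _ _ _ => rfl)

def emptyTup {Y : Finset A} (hY : Y = ∅) : Tup D Y :=
  fun a => absurd a.2 (by simp [hY])

lemma tup_eq_of_empty {Y : Finset A} (hY : Y = ∅) (s t : Tup D Y) : s = t :=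
  funext fun a => absurd a.2 (by simp [hY])

lemma bagTotal_eq_apply {Y : Finset A} (hY : Y = ∅) (R : Bag D Y) (t : Tup D Y) :
    bagTotal R = R t := by
  classical
  have hsub : R.support ⊆ {t} := fun x _ => by
    simp [tup_eq_of_empty hY x t]
  rw [bagTotal, Finsupp.sum]
  rcases Finset.subset_singleton_iff.mp hsub with h | h
  · rw [h, Finset.sum_empty]
    exact (Finsupp.notMem_support_iff.mp (by simp [h])).symm
  · rw [h, Finset.sum_singleton]

lemma bag_ext_of_empty {Y : Finset A} (hY : Y = ∅) (R S : Bag D Y)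
    (h : bagTotal R = bagTotal S) : R = S :=
  Finsupp.ext fun t => by rw [← bagTotal_eq_apply hY R t, ← bagTotal_eq_apply hY S t, h]

lemma bagTotal_single {Y : Finset A} (t : Tup D Y) (n : ℕ) :
    bagTotal (Finsupp.single t n : Bag D Y) = n := by
  rw [bagTotal]
  exact Finsupp.sum_single_index rfl

end Aux
section Ext
variable {A : Type} [DecidableEq A] {D : A → Type}

/-- Extend a tuple over `e` to a tuple over `X`, where every attribute of `X`
outside `e` equals `u`, filled with the default value `d0`. -/
noncomputable def extTup (u : A) (d0 : D u) {e X : Finset A}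
    (hu : ∀ a ∈ X, a ∉ e → a = u) (t : Tup D e) : Tup D X :=
  fun a => if h : a.1 ∈ e then t ⟨a.1, h⟩
    else cast (congrArg D (hu a.1 a.2 h)).symm d0

lemma restrict_extTup (u : A) (d0 : D u) {e X : Finset A} (he : e ⊆ X)
    (hu : ∀ a ∈ X, a ∉ e → a = u) (t : Tup D e) :
    Tup.restrict he (extTup u d0 hu t) = t := by
  funext a
  show extTup u d0 hu t ⟨a.1, he a.2⟩ = t a
  rw [extTup, dif_pos a.2]

lemma marginal_extTup (u : A) (d0 : D u) {e X : Finset A} (he : e ⊆ X)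
    (hu : ∀ a ∈ X, a ∉ e → a = u) (R : Bag D e) :
    Bag.marginal he (Finsupp.mapDomain (extTup u d0 hu) R) = R := by
  rw [Bag.marginal, ← Finsupp.mapDomain_comp]
  have : Tup.restrict (D := D) he ∘ extTup u d0 hu = id :=
    funext fun t => restrict_extTup u d0 he hu t
  rw [this, Finsupp.mapDomain_id]

lemma marginal_extTup_comm (u : A) (d0 : D u) {e X Z e' : Finset A}
    (hu : ∀ a ∈ X, a ∉ e → a = u) (hZ : Z ⊆ X) (h1 : e' ⊆ e)
    (h3 : ∀ a ∈ Z, a ∉ e' → a = u)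
    (hcap : ∀ a ∈ Z, a ∈ e → a ∈ e') (R : Bag D e) :
    Bag.marginal hZ (Finsupp.mapDomain (extTup u d0 hu) R)
      = Finsupp.mapDomain (extTup u d0 h3) (Bag.marginal h1 R) := by
  rw [Bag.marginal, Bag.marginal, ← Finsupp.mapDomain_comp, ← Finsupp.mapDomain_comp]
  congr 1
  funext t
  funext a
  show extTup u d0 hu t ⟨a.1, hZ a.2⟩ = extTup u d0 h3 (Tup.restrict h1 t) a
  by_cases h : a.1 ∈ e'
  · rw [extTup, extTup, dif_pos (h1 h), dif_pos h]
    rfl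
  · have h2 : a.1 ∉ e := fun he2 => h (hcap a.1 a.2 he2)
    rw [extTup, extTup, dif_neg h2, dif_neg h]

end Ext
section Small
variable {A : Type} [DecidableEq A] {D : A → Type}

lemma exists_T_of_card_le_one {E : Finset (Finset A)} (R : ∀ X ∈ E, Bag D X)
    (I : Finset (Finset A)) (hI : I ⊆ E) (h1 : I.card ≤ 1) :
    ∃ T : Bag D (I.sup id), ∀ (X : Finset A) (hX : X ∈ I),
      Bag.marginal (Finset.le_sup (f := id) hX) T = R X (hI hX) := by
  rcases Finset.card_le_one_iff_subset_singleton.mp h1 with ⟨X, hXs⟩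
  by_cases hXI : X ∈ I
  · have hsup : I.sup id ⊆ X := Finset.sup_le fun Y hY => by
      rw [Finset.mem_singleton.mp (hXs hY)]; exact le_refl X
    refine ⟨Bag.marginal hsup (R X (hI hXI)), ?_⟩
    intro Y hY
    have hYX : Y = X := Finset.mem_singleton.mp (hXs hY)
    subst hYX
    rw [Bag.marginal_marginal, Bag.marginal_self]
  · have hIe : I = ∅ := by
      rw [Finset.eq_empty_iff_forall_notMem]
      intro Y hY
      exact hXI ((Finset.mem_singleton.mp (hXs hY)) ▸ hY)
    refine ⟨0, ?_⟩
    intro Y hY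
    exact absurd hY (by simp [hIe])

lemma kwise_of_card_le_one {E : Finset (Finset A)} (R : ∀ X ∈ E, Bag D X)
    (hE : E.card ≤ 1) (k : ℕ) : KWiseConsistent D E R k :=
  fun I hI _ => exists_T_of_card_le_one R I hI
    (le_trans (Finset.card_le_card hI) hE)

end Small
section EdgeStep
variable {A : Type} [DecidableEq A] {D : A → Type}

lemma edge_step {E : Finset (Finset A)} {e f : Finset A} (he : e ∈ E)
    (hf : f ∈ E) (hfe : f ≠ e) (hef : e ⊆ f)
    (D' : ∀ X ∈ E.erase e, Bag D X) :
    ∃ D1 : ∀ X ∈ E, Bag D X, ∀ k : ℕ, 1 ≤ k →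
      (KWiseConsistent D (E.erase e) D' k ↔ KWiseConsistent D E D1 k) := by
  classical
  have hf' : f ∈ E.erase e := Finset.mem_erase.mpr ⟨hfe, hf⟩
  refine ⟨fun X hX => if hXe : X = e
      then Bag.marginal (by rw [hXe]; exact hef) (D' f hf')
      else D' X (Finset.mem_erase.mpr ⟨hXe, hX⟩), fun k hk => ⟨?_, ?_⟩⟩
  · -- forward
    intro hcons I hI hcard
    by_cases heI : e ∈ I
    · set I' : Finset (Finset A) := insert f (I.erase e) with hI'def
      have hI' : I' ⊆ E.erase e := by
        intro Y hY
        rcases Finset.mem_insert.mp hY with h | h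
        · rw [h]; exact hf'
        · exact Finset.mem_erase.mpr ⟨(Finset.mem_erase.mp h).1,
            hI (Finset.mem_of_mem_erase h)⟩
      have hcard' : I'.card ≤ k := by
        calc I'.card ≤ (I.erase e).card + 1 := Finset.card_insert_le _ _
        _ = I.card - 1 + 1 := by rw [Finset.card_erase_of_mem heI]
        _ = I.card := Nat.succ_pred_eq_of_pos (Finset.card_pos.mpr ⟨e, heI⟩)
        _ ≤ k := hcard
      obtain ⟨T', hT'⟩ := hcons I' hI' hcard'
      have hfsup : f ≤ I'.sup id :=
        Finset.le_sup (f := id) (Finset.mem_insert_self f (I.erase e))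
      have hsub : I.sup id ≤ I'.sup id := by
        refine Finset.sup_le fun X hX => ?_
        by_cases hXe : X = e
        · subst hXe
          exact hef.trans hfsup
        · exact Finset.le_sup (f := id)
            (Finset.mem_insert_of_mem (Finset.mem_erase.mpr ⟨hXe, hX⟩))
      refine ⟨Bag.marginal hsub T', ?_⟩
      intro X hX
      rw [Bag.marginal_marginal]
      by_cases hXe : X = e
      · subst hXe
        simp only [dif_pos]
        have h1 := hT' f (Finset.mem_insert_self f _)
        have h2 : Bag.marginal (Finset.Subset.trans (Finset.le_sup (f := id) hX) hsub) T'
            = Bag.marginal hef (Bag.marginal hfsup T') := by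
          rw [Bag.marginal_marginal]
        rw [h2]
        have h3 : Bag.marginal hfsup T' = D' f hf' := h1
        rw [h3]
      · simp only [dif_neg hXe]
        have hXI' : X ∈ I' := Finset.mem_insert_of_mem (Finset.mem_erase.mpr ⟨hXe, hX⟩)
        exact hT' X hXI'
    · have hIsub : I ⊆ E.erase e := fun Y hY =>
        Finset.mem_erase.mpr ⟨fun h => heI (h ▸ hY), hI hY⟩
      obtain ⟨T, hT⟩ := hcons I hIsub hcard
      refine ⟨T, ?_⟩
      intro X hX
      have hXne : X ≠ e := fun h => heI (h ▸ hX)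
      rw [hT X hX]
      simp only [dif_neg hXne]
  · -- backward
    intro hcons I hI hcard
    have hIE : I ⊆ E := fun Y hY => Finset.mem_of_mem_erase (hI hY)
    obtain ⟨T, hT⟩ := hcons I hIE hcard
    refine ⟨T, ?_⟩
    intro X hX
    have hXne : X ≠ e := (Finset.mem_erase.mp (hI hX)).1
    rw [hT X hX]
    simp only [dif_neg hXne]

end EdgeStep
section VertexStep
variable {A : Type} [DecidableEq A] {D : A → Type} [∀ a : A, Nonempty (D a)]

lemma hu1_gen (u : A) (X : Finset A) : ∀ a ∈ X, a ∉ X.erase u → a = u :=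
  fun a ha hae => by
    by_contra hne
    exact hae (Finset.mem_erase.mpr ⟨hne, ha⟩)

lemma vertex_step (H : FinHypergraph A) (u : A)
    (hE : ∀ X ∈ H.E, X ⊆ H.V ∧ X.Nonempty)
    (D' : ∀ X ∈ (H.vdel u).E, Bag D X) :
    ∃ D1 : ∀ X ∈ H.E, Bag D X, ∀ k : ℕ, 1 ≤ k →
      (KWiseConsistent D (H.vdel u).E D' k ↔ KWiseConsistent D H.E D1 k) := by
  classical
  obtain ⟨d0⟩ := ‹∀ a : A, Nonempty (D a)› u
  have f1 : ∀ X ∈ H.E, X ∩ H.V.erase u = X.erase u := by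
    intro X hX
    ext a
    simp only [Finset.mem_inter, Finset.mem_erase]
    constructor
    · rintro ⟨h1, h2, _⟩; exact ⟨h2, h1⟩
    · rintro ⟨h1, h2⟩; exact ⟨h2, h1, (hE X hX).1 h2⟩
  have f2 : ∀ X ∈ H.E, (X.erase u).Nonempty → X.erase u ∈ (H.vdel u).E := by
    intro X hX hne
    exact Finset.mem_filter.mpr ⟨Finset.mem_image.mpr ⟨X, hX, f1 X hX⟩, hne⟩
  have f3 : ∀ Y ∈ (H.vdel u).E, Y.Nonempty ∧ u ∉ Y ∧ ∃ X ∈ H.E, X.erase u = Y := by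
    intro Y hY
    obtain ⟨hY1, hY2⟩ := Finset.mem_filter.mp hY
    obtain ⟨X, hXE, hXY⟩ := Finset.mem_image.mp hY1
    refine ⟨hY2, ?_, X, hXE, by rw [← f1 X hXE]; exact hXY⟩
    rw [← hXY]
    intro hu
    exact (Finset.mem_erase.mp (Finset.mem_inter.mp hu).2).1 rfl
  have f4 : ∀ X ∈ H.E, X.erase u ∉ (H.vdel u).E → X.erase u = ∅ ∧ X = {u} := by
    intro X hX h
    have h0 : X.erase u = ∅ := by
      by_contra hne
      exact h (f2 X hX (Finset.nonempty_iff_ne_empty.mpr hne))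
    refine ⟨h0, ?_⟩
    rcases (Finset.erase_eq_empty_iff X u).mp h0 with h' | h'
    · exact absurd h' (Finset.nonempty_iff_ne_empty.mp (hE X hX).2)
    · exact h'
  by_cases hEne : (H.vdel u).E.Nonempty
  · -- main case
    set e0 := hEne.choose with he0def
    have he0 : e0 ∈ (H.vdel u).E := hEne.choose_spec
    set N := bagTotal (D' e0 he0) with hNdef
    obtain ⟨D1, hD1pos, hD1neg⟩ :
        ∃ D1 : ∀ X ∈ H.E, Bag D X,
          (∀ (X : Finset A) (hX : X ∈ H.E) (h : X.erase u ∈ (H.vdel u).E),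
            D1 X hX = Finsupp.mapDomain (extTup u d0 (hu1_gen u X)) (D' _ h)) ∧
          (∀ (X : Finset A) (hX : X ∈ H.E) (h : X.erase u ∉ (H.vdel u).E),
            D1 X hX = Finsupp.mapDomain (extTup u d0 (hu1_gen u X))
              (Finsupp.single (emptyTup (D := D) (f4 X hX h).1) N)) := by
      refine ⟨fun X hX => if h : X.erase u ∈ (H.vdel u).E
          then Finsupp.mapDomain (extTup u d0 (hu1_gen u X)) (D' _ h)
          else Finsupp.mapDomain (extTup u d0 (hu1_gen u X))
            (Finsupp.single (emptyTup (D := D) (f4 X hX h).1) N), ?_, ?_⟩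
      · intro X hX h; simp only [dif_pos h]
      · intro X hX h; simp only [dif_neg h]
    refine ⟨D1, fun k hk => ⟨?_, ?_⟩⟩
    · -- forward
      intro hcons I hI hcard
      by_cases hcI : I.card ≤ 1
      · exact exists_T_of_card_le_one D1 I hI hcI
      have h2I : 2 ≤ I.card := not_le.mp hcI
      have h2k : 2 ≤ k := le_trans h2I hcard
      set I' : Finset (Finset A) := (I.image (fun X => X.erase u)).erase ∅ with hI'def
      have hI' : I' ⊆ (H.vdel u).E := by
        intro Y hY
        obtain ⟨hYne, hY2⟩ := Finset.mem_erase.mp hY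
        obtain ⟨X, hXI, rfl⟩ := Finset.mem_image.mp hY2
        exact f2 X (hI hXI) (Finset.nonempty_iff_ne_empty.mpr hYne)
      have hcard' : I'.card ≤ k :=
        le_trans (le_trans (Finset.card_erase_le) (Finset.card_image_le)) hcard
      obtain ⟨T', hT'⟩ := hcons I' hI' hcard'
      have hunsup : u ∉ I'.sup id := by
        intro hu
        obtain ⟨Y, hY, huY⟩ := Finset.mem_sup.mp hu
        exact (f3 Y (hI' hY)).2.1 huY
      -- total of T' equals N
      obtain ⟨X1, hX1I, hX1ne⟩ := Finset.exists_mem_ne h2I {u}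
      have he1ne : (X1.erase u).Nonempty := by
        rw [Finset.nonempty_iff_ne_empty]
        intro h0
        rcases (Finset.erase_eq_empty_iff X1 u).mp h0 with h' | h'
        · exact Finset.nonempty_iff_ne_empty.mp (hE X1 (hI hX1I)).2 h'
        · exact hX1ne h'
      have he1I' : X1.erase u ∈ I' := Finset.mem_erase.mpr
        ⟨Finset.nonempty_iff_ne_empty.mp he1ne,
          Finset.mem_image_of_mem _ hX1I⟩
      have htot1 : bagTotal T' = bagTotal (D' (X1.erase u) (hI' he1I')) := by
        rw [← hT' (X1.erase u) he1I', bagTotal_marginal]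
      have htot2 : bagTotal (D' (X1.erase u) (hI' he1I')) = N := by
        set J : Finset (Finset A) := insert (X1.erase u) {e0} with hJdef
        have hJ : J ⊆ (H.vdel u).E := by
          intro Y hY
          rcases Finset.mem_insert.mp hY with h | h
          · rw [h]; exact hI' he1I'
          · rw [Finset.mem_singleton.mp h]; exact he0
        have hJcard : J.card ≤ k := le_trans
          (le_trans (Finset.card_insert_le _ _) (by simp)) h2k
        obtain ⟨T2, hT2⟩ := hcons J hJ hJcard
        have a1 := hT2 (X1.erase u) (Finset.mem_insert_self _ _)
        have a2 := hT2 e0 (Finset.mem_insert_of_mem (Finset.mem_singleton_self _))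
        calc bagTotal (D' (X1.erase u) (hI' he1I'))
            = bagTotal T2 := by rw [← a1, bagTotal_marginal]
          _ = N := by rw [hNdef, ← a2, bagTotal_marginal]
      have htotN : bagTotal T' = N := htot1.trans htot2
      -- the lifted bag
      have hsub : I.sup id ≤ I'.sup id ∪ {u} := by
        refine Finset.sup_le fun X hXI => ?_
        intro a haX
        by_cases hau : a = u
        · subst hau; exact Finset.mem_union_right _ (Finset.mem_singleton_self a)
        · have haE : a ∈ X.erase u := Finset.mem_erase.mpr ⟨hau, haX⟩
          have hmem : X.erase u ∈ I' := Finset.mem_erase.mpr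
            ⟨Finset.nonempty_iff_ne_empty.mp ⟨a, haE⟩, Finset.mem_image_of_mem _ hXI⟩
          exact Finset.mem_union_left _ (Finset.mem_sup.mpr ⟨X.erase u, hmem, haE⟩)
      have huW : ∀ a ∈ I'.sup id ∪ {u}, a ∉ I'.sup id → a = u := by
        intro a ha h
        rcases Finset.mem_union.mp ha with h1 | h1
        · exact absurd h1 h
        · exact Finset.mem_singleton.mp h1
      refine ⟨Bag.marginal hsub (Finsupp.mapDomain (extTup u d0 huW) T'), ?_⟩
      intro X hX
      rw [Bag.marginal_marginal]
      have hXW : X ⊆ I'.sup id ∪ {u} :=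
        Finset.Subset.trans (Finset.le_sup (f := id) hX) hsub
      have h1X : X.erase u ⊆ I'.sup id := by
        intro a ha
        have hmem : X.erase u ∈ I' := Finset.mem_erase.mpr
          ⟨Finset.nonempty_iff_ne_empty.mp ⟨a, ha⟩, Finset.mem_image_of_mem _ hX⟩
        exact Finset.mem_sup.mpr ⟨X.erase u, hmem, ha⟩
      have hcapX : ∀ a ∈ X, a ∈ I'.sup id → a ∈ X.erase u := fun a ha h =>
        Finset.mem_erase.mpr ⟨fun he' => hunsup (he' ▸ h), ha⟩
      rw [marginal_extTup_comm u d0 huW hXW h1X (hu1_gen u X) hcapX T']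
      by_cases hXe : X.erase u ∈ (H.vdel u).E
      · rw [hD1pos X (hI hX) hXe]
        have hmem : X.erase u ∈ I' := Finset.mem_erase.mpr
          ⟨Finset.nonempty_iff_ne_empty.mp (f3 _ hXe).1, Finset.mem_image_of_mem _ hX⟩
        exact congrArg (Finsupp.mapDomain (extTup u d0 (hu1_gen u X)))
          (hT' (X.erase u) hmem)
      · rw [hD1neg X (hI hX) hXe]
        have h0 : X.erase u = ∅ := (f4 X (hI hX) hXe).1
        refine congrArg (Finsupp.mapDomain (extTup u d0 (hu1_gen u X))) ?_
        apply bag_ext_of_empty h0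
        rw [bagTotal_marginal, bagTotal_single, htotN]
    · -- backward
      intro hcons I' hI' hcard
      set g : Finset A → Finset A := fun Y =>
        if h : ∃ X ∈ H.E, X.erase u = Y then h.choose else ∅ with hgdef
      have hg : ∀ Y ∈ I', g Y ∈ H.E ∧ (g Y).erase u = Y := by
        intro Y hY
        have hex : ∃ X ∈ H.E, X.erase u = Y := (f3 Y (hI' hY)).2.2
        rw [hgdef]
        simp only [dif_pos hex]
        exact hex.choose_spec
      have hIE : I'.image g ⊆ H.E := by
        intro Z hZ
        obtain ⟨Y, hY, rfl⟩ := Finset.mem_image.mp hZ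
        exact (hg Y hY).1
      obtain ⟨T, hT⟩ := hcons (I'.image g) hIE
        (le_trans (Finset.card_image_le) hcard)
      have hsub' : I'.sup id ≤ (I'.image g).sup id := by
        refine Finset.sup_le fun Y hY => ?_
        intro a ha
        refine Finset.mem_sup.mpr ⟨g Y, Finset.mem_image_of_mem g hY, ?_⟩
        exact Finset.erase_subset u (g Y) ((hg Y hY).2.symm ▸ ha)
      refine ⟨Bag.marginal hsub' T, ?_⟩
      intro Y hY
      rw [Bag.marginal_marginal]
      have hgY := hg Y hY
      have hYg : Y ⊆ g Y := fun a ha => Finset.erase_subset u (g Y) (hgY.2.symm ▸ ha)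
      have hgYsup : g Y ≤ (I'.image g).sup id :=
        Finset.le_sup (f := id) (Finset.mem_image_of_mem g hY)
      have step1 : Bag.marginal
          (Finset.Subset.trans (Finset.le_sup (f := id) hY) hsub') T
          = Bag.marginal hYg (Bag.marginal hgYsup T) := by
        rw [Bag.marginal_marginal]
      rw [step1, hT (g Y) (Finset.mem_image_of_mem g hY)]
      have key : ∀ (Y' : Finset A) (hEq : (g Y).erase u = Y') (p : Y' ∈ (H.vdel u).E)
          (hYg' : Y' ⊆ g Y),
          Bag.marginal hYg' (D1 (g Y) (hIE (Finset.mem_image_of_mem g hY))) = D' Y' p := by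
        intro Y' hEq p hYg'
        subst hEq
        rw [hD1pos (g Y) (hIE (Finset.mem_image_of_mem g hY)) p]
        exact marginal_extTup u d0 hYg' (hu1_gen u (g Y)) _
      exact key Y hgY.2 (hI' hY) hYg
  · -- (H.vdel u).E empty: both sides trivially consistent
    have hEone : H.E.card ≤ 1 := by
      refine Finset.card_le_one_iff_subset_singleton.mpr ⟨{u}, ?_⟩
      intro X hX
      have : X.erase u ∉ (H.vdel u).E := fun h => hEne ⟨X.erase u, h⟩
      rw [Finset.mem_singleton]
      exact (f4 X hX this).2
    refine ⟨fun X hX => Finsupp.mapDomain (extTup u d0 (hu1_gen u X))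
      (Finsupp.single (emptyTup (D := D)
        (f4 X hX (fun h => hEne ⟨X.erase u, h⟩)).1) 1), fun k hk => ?_⟩
    have hEempty : (H.vdel u).E.card ≤ 1 := by
      rw [Finset.not_nonempty_iff_eq_empty] at hEne
      simp [hEne]
    exact iff_of_true (kwise_of_card_le_one D' hEempty k)
      (kwise_of_card_le_one _ hEone k)

end VertexStep
section Main
variable {A : Type} [DecidableEq A] {D : A → Type}

lemma step_preserves {H H' : FinHypergraph A} (hstep : SafeStep H H')
    (hE : ∀ X ∈ H.E, X ⊆ H.V ∧ X.Nonempty) :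
    ∀ X ∈ H'.E, X ⊆ H'.V ∧ X.Nonempty := by
  rcases hstep with ⟨u, hu, rfl⟩ | ⟨e, he, ⟨f, hf, hfe, hef⟩, rfl⟩
  · intro X hX
    obtain ⟨hX1, hX2⟩ := Finset.mem_filter.mp hX
    obtain ⟨Y, hY, rfl⟩ := Finset.mem_image.mp hX1
    exact ⟨Finset.inter_subset_right, hX2⟩
  · intro X hX
    exact hE X (Finset.mem_of_mem_erase hX)

lemma step_lift {D : A → Type} [∀ a : A, Nonempty (D a)] (H H' : FinHypergraph A)
    (hE : ∀ X ∈ H.E, X ⊆ H.V ∧ X.Nonempty) (hstep : SafeStep H H')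
    (D' : ∀ X ∈ H'.E, Bag D X) :
    ∃ D1 : ∀ X ∈ H.E, Bag D X, ∀ k : ℕ, 1 ≤ k →
      (KWiseConsistent D H'.E D' k ↔ KWiseConsistent D H.E D1 k) := by
  rcases hstep with ⟨u, hu, rfl⟩ | ⟨e, he, ⟨f, hf, hfe, hef⟩, rfl⟩
  · exact vertex_step H u hE D'
  · exact edge_step he hf hfe hef D'

end Main


/-- if `H0` is obtained from the hypergraph `H1` by a sequence of safe-deletion
operations, then for every collection `D0` of bags over `H0` there is a collection `D1` of
bags over `H1` such that, for every positive integer `k`, `D0` is `k`-wise consistent iff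
`D1` is `k`-wise consistent. -/
theorem stmt9 {D : A → Type} [∀ a : A, Nonempty (D a)] (H1 H0 : FinHypergraph A)
    (hE1 : ∀ X ∈ H1.E, X ⊆ H1.V ∧ X.Nonempty)
    (hsteps : Relation.ReflTransGen SafeStep H1 H0)
    (D0 : ∀ X ∈ H0.E, Bag D X) :
    ∃ D1 : ∀ X ∈ H1.E, Bag D X,
      ∀ k : ℕ, 1 ≤ k →
        (KWiseConsistent D H0.E D0 k ↔ KWiseConsistent D H1.E D1 k) := by

  revert hE1
  induction hsteps using Relation.ReflTransGen.head_induction_on with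
  | refl => exact fun _ => ⟨D0, fun _ _ => Iff.rfl⟩
  | head hstep hrest ih =>
    intro hE1
    obtain ⟨Dc, hDc⟩ := ih (step_preserves hstep hE1)
    obtain ⟨Da, hDa⟩ := step_lift _ _ hE1 hstep Dc
    exact ⟨Da, fun k hk => (hDc k hk).trans (hDa k hk)⟩
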